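/- Let 7/3 < p < 5, 1 < q < p, and ω > 0. Then m_ω = m̃_ω, where m_ω = inf{S_ω(φ) : φ ∈ H¹(ℝ³)\{0}, G(φ) = 0} and m̃_ω = inf{I_ω(φ) : φ ∈ H¹(ℝ³)\{0}, G(φ) ≤ 0} with I_ω = S_ω − (2/(3(q−1)))G. -/

import Mathlib

open Real Set MeasureTheory

noncomputable section

abbrev E3 := EuclideanSpace ℝ (Fin 3)

/-- `‖∇φ‖²_{L²(ℝ³)}`. -/
def gradNormSq (φ : E3 → ℂ) : ℝ := ∫ x : E3, ‖fderiv ℝ φ x‖ ^ 2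

/-- `‖φ‖^r_{L^r(ℝ³)}`. -/
def lpPow (φ : E3 → ℂ) (r : ℝ) : ℝ := ∫ x : E3, ‖φ x‖ ^ r

/-- Membership in `H¹(ℝ³)` (with pointwise derivative). -/
def InH1 (φ : E3 → ℂ) : Prop :=
  Differentiable ℝ φ ∧ MemLp φ 2 (volume : Measure E3) ∧
    MemLp (fun x => fderiv ℝ φ x) 2 (volume : Measure E3)

/-- The action functional `S_ω`. -/
def Sfun (p q ω : ℝ) (φ : E3 → ℂ) : ℝ :=
  (1 / 2) * gradNormSq φ - (1 / (p + 1)) * lpPow φ (p + 1)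
    + (1 / (q + 1)) * lpPow φ (q + 1) + (ω / 2) * lpPow φ 2

/-- The Pohozaev functional `G`. -/
def Gfun (p q : ℝ) (φ : E3 → ℂ) : ℝ :=
  gradNormSq φ - (3 * (p - 1) / (2 * (p + 1))) * lpPow φ (p + 1)
    + (3 * (q - 1) / (2 * (q + 1))) * lpPow φ (q + 1)

/-- The functional `I_ω = S_ω − (2/(3(q−1)))·G`. -/
def Ifun (p q ω : ℝ) (φ : E3 → ℂ) : ℝ :=
  Sfun p q ω φ - (2 / (3 * (q - 1))) * Gfun p q φ

-- scaling map
def scl (l : ℝ) (φ : E3 → ℂ) : E3 → ℂ := fun x => (l ^ ((3:ℝ)/2) : ℝ) • φ (l • x)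

lemma scl_hasFDerivAt {φ : E3 → ℂ} (hφ : Differentiable ℝ φ) (l : ℝ) (x : E3) :
    HasFDerivAt (scl l φ) ((l ^ ((3:ℝ)/2) * l) • fderiv ℝ φ (l • x)) x := by
  have h0 : HasFDerivAt (fun y : E3 => l • y) (l • ContinuousLinearMap.id ℝ E3) x :=
    (hasFDerivAt_id x).const_smul l
  have h1 := ((hφ (l • x)).hasFDerivAt.comp x h0)
  have h2 := h1.const_smul ((l : ℝ) ^ ((3:ℝ)/2))
  have h3 : (l ^ ((3:ℝ)/2)) • ((fderiv ℝ φ (l • x)).comp (l • ContinuousLinearMap.id ℝ E3))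
      = (l ^ ((3:ℝ)/2) * l) • fderiv ℝ φ (l • x) := by
    ext v
    simp only [ContinuousLinearMap.smul_apply, ContinuousLinearMap.coe_comp',
      Function.comp_apply, ContinuousLinearMap.coe_id', id_eq]
    rw [ContinuousLinearMap.map_smul, smul_smul]
  rw [h3] at h2
  exact h2
lemma scl_fderiv {φ : E3 → ℂ} (hφ : Differentiable ℝ φ) (l : ℝ) (x : E3) :
    fderiv ℝ (scl l φ) x = (l ^ ((3:ℝ)/2) * l) • fderiv ℝ φ (l • x) :=
  (scl_hasFDerivAt hφ l x).fderiv

lemma scl_ne_zero {φ : E3 → ℂ} (hφ : φ ≠ 0) {l : ℝ} (hl : 0 < l) : scl l φ ≠ 0 := by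
  obtain ⟨x, hx⟩ := Function.ne_iff.1 hφ
  intro h
  apply hx
  have := congrFun h (l⁻¹ • x)
  simp only [scl, Pi.zero_apply, smul_smul, mul_inv_cancel₀ hl.ne', one_smul] at this
  have hc : (0:ℝ) < l ^ ((3:ℝ)/2) := Real.rpow_pos_of_pos hl _
  simpa [smul_eq_zero, hc.ne', Pi.zero_apply] using this

lemma scl_inH1 {φ : E3 → ℂ} (h : InH1 φ) {l : ℝ} (hl : 0 < l) : InH1 (scl l φ) := by
  obtain ⟨hdiff, hL2, hdL2⟩ := h
  have hc₀ : (0:ℝ) < l ^ ((3:ℝ)/2) := Real.rpow_pos_of_pos hl _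
  refine ⟨fun x => (scl_hasFDerivAt hdiff l x).differentiableAt, ?_, ?_⟩
  · rw [memLp_two_iff_integrable_sq_norm]
    · have hInt : Integrable (fun x : E3 => ‖φ x‖ ^ 2) :=
        (memLp_two_iff_integrable_sq_norm hL2.aestronglyMeasurable).1 hL2
      have h2 := (hInt.comp_smul (μ := (volume : Measure E3)) hl.ne').const_mul
        ((l ^ ((3:ℝ)/2)) ^ 2)
      refine h2.congr (Filter.Eventually.of_forall fun x => ?_)
      simp only [scl, norm_smul, Real.norm_eq_abs, abs_of_nonneg hc₀.le]
      ring
    · exact ((hdiff.continuous.comp (continuous_const_smul l)).const_smul ((l ^ ((3:ℝ)/2) : ℝ))).aestronglyMeasurable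
  · rw [memLp_two_iff_integrable_sq_norm]
    · have hInt : Integrable (fun x : E3 => ‖fderiv ℝ φ x‖ ^ 2) :=
        (memLp_two_iff_integrable_sq_norm hdL2.aestronglyMeasurable).1 hdL2
      have h2 := (hInt.comp_smul (μ := (volume : Measure E3)) hl.ne').const_mul
        ((l ^ ((3:ℝ)/2) * l) ^ 2)
      refine h2.congr (Filter.Eventually.of_forall fun x => ?_)
      show (l ^ ((3:ℝ)/2) * l) ^ 2 * ‖fderiv ℝ φ (l • x)‖ ^ 2 = ‖fderiv ℝ (scl l φ) x‖ ^ 2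
      rw [scl_fderiv hdiff l x,
        norm_smul (l ^ ((3:ℝ)/2) * l) (fderiv ℝ φ (l • x)), Real.norm_eq_abs,
        abs_of_nonneg (by positivity : (0:ℝ) ≤ l ^ ((3:ℝ)/2) * l)]
      ring
    · exact (measurable_fderiv ℝ (scl l φ)).aestronglyMeasurable

lemma scl_gradNormSq {φ : E3 → ℂ} (hφ : Differentiable ℝ φ) {l : ℝ} (hl : 0 < l) :
    gradNormSq (scl l φ) = l ^ ((2:ℝ)) * gradNormSq φ := by
  unfold gradNormSq
  have h1 : ∀ x : E3, ‖fderiv ℝ (scl l φ) x‖ ^ 2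
      = (l ^ ((3:ℝ)/2) * l) ^ 2 * ‖fderiv ℝ φ (l • x)‖ ^ 2 := by
    intro x
    rw [scl_fderiv hφ l x,
      norm_smul (l ^ ((3:ℝ)/2) * l) (fderiv ℝ φ (l • x)), Real.norm_eq_abs,
      abs_of_nonneg (by positivity : (0:ℝ) ≤ l ^ ((3:ℝ)/2) * l)]
    ring
  simp_rw [h1]
  rw [integral_const_mul]
  have hcs : (∫ x : E3, ‖fderiv ℝ φ (l • x)‖ ^ 2)
      = (l ^ (3:ℕ))⁻¹ • ∫ y : E3, ‖fderiv ℝ φ y‖ ^ 2 := by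
    have := Measure.integral_comp_smul_of_nonneg (volume : Measure E3)
      (fun y : E3 => ‖fderiv ℝ φ y‖ ^ 2) l (hR := hl.le)
    simpa [finrank_euclideanSpace_fin] using this
  rw [hcs, smul_eq_mul]
  have e1 : (l ^ ((3:ℝ)/2)) ^ 2 = l ^ (3:ℕ) := by
    rw [← Real.rpow_natCast (l ^ ((3:ℝ)/2)) 2, ← Real.rpow_mul hl.le,
      show ((3:ℝ)/2 * ((2:ℕ):ℝ)) = ((3:ℕ):ℝ) by push_cast; ring, Real.rpow_natCast]
  have e2 : l ^ ((2:ℝ)) = l ^ (2:ℕ) := by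
    rw [show ((2:ℝ)) = ((2:ℕ):ℝ) by norm_num, Real.rpow_natCast]
  rw [mul_pow, e1, e2]
  have h3 : (0:ℝ) < l ^ (3:ℕ) := by positivity
  field_simp

lemma scl_lpPow {φ : E3 → ℂ} {l : ℝ} (hl : 0 < l) (r : ℝ) (hr : 0 ≤ r) :
    lpPow (scl l φ) r = l ^ (3/2*r - 3) * lpPow φ r := by
  unfold lpPow
  have h1 : ∀ x : E3, ‖scl l φ x‖ ^ r = (l ^ ((3:ℝ)/2)) ^ r * ‖φ (l • x)‖ ^ r := by
    intro x
    rw [scl, norm_smul, Real.norm_eq_abs,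
      abs_of_nonneg (by positivity : (0:ℝ) ≤ l ^ ((3:ℝ)/2)),
      Real.mul_rpow (by positivity) (norm_nonneg _)]
  simp_rw [h1]
  rw [integral_const_mul]
  have hcs : (∫ x : E3, ‖φ (l • x)‖ ^ r) = (l ^ (3:ℕ))⁻¹ • ∫ y : E3, ‖φ y‖ ^ r := by
    have := Measure.integral_comp_smul_of_nonneg (volume : Measure E3)
      (fun y : E3 => ‖φ y‖ ^ r) l (hR := hl.le)
    simpa [finrank_euclideanSpace_fin] using this
  rw [hcs, smul_eq_mul]
  have e1 : (l ^ ((3:ℝ)/2)) ^ r = l ^ (3/2*r) := by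
    rw [← Real.rpow_mul hl.le]
  have e2 : (l ^ (3:ℕ))⁻¹ = l ^ (-(3:ℝ)) := by
    rw [← Real.rpow_natCast l 3, ← Real.rpow_neg hl.le]
    norm_num
  rw [e1, e2, ← mul_assoc, ← Real.rpow_add hl]
  ring_nf
set_option maxHeartbeats 1000000 in
lemma alg_main (p q ω a b c d a' b' c' : ℝ)
    (hp1 : 7 / 3 < p) (hq : 1 < q) (hqp : q < p) (hω : 0 < ω)
    (ha : 0 ≤ a) (hc : 0 ≤ c) (hd : 0 ≤ d)
    (haa : a' ≤ a) (hcc : c' ≤ c)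
    (hG' : a' - 3 * (p - 1) / (2 * (p + 1)) * b' + 3 * (q - 1) / (2 * (q + 1)) * c' = 0)
    (hG : a - 3 * (p - 1) / (2 * (p + 1)) * b + 3 * (q - 1) / (2 * (q + 1)) * c ≤ 0) :
    1 / 2 * a' - 1 / (p + 1) * b' + 1 / (q + 1) * c' + ω / 2 * d ≤
      (1 / 2 * a - 1 / (p + 1) * b + 1 / (q + 1) * c + ω / 2 * d)
        - 2 / (3 * (q - 1)) *
          (a - 3 * (p - 1) / (2 * (p + 1)) * b + 3 * (q - 1) / (2 * (q + 1)) * c) := by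
  have hp0 : (0:ℝ) < p + 1 := by linarith
  have hp1' : (0:ℝ) < p - 1 := by linarith
  have hq0 : (0:ℝ) < q + 1 := by linarith
  have hq1 : (0:ℝ) < q - 1 := by linarith
  have h37 : (0:ℝ) < 3 * p - 7 := by linarith
  have hne1 : (p + 1) ≠ 0 := hp0.ne'
  have hne2 : (p - 1) ≠ 0 := hp1'.ne'
  have hne3 : (q + 1) ≠ 0 := hq0.ne'
  have key' : 1 / 2 * a' - 1 / (p + 1) * b' + 1 / (q + 1) * c' =
      (3 * p - 7) / (6 * (p - 1)) * a' + (p - q) / ((q + 1) * (p - 1)) * c'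
        + 2 / (3 * (p - 1)) *
          (a' - 3 * (p - 1) / (2 * (p + 1)) * b' + 3 * (q - 1) / (2 * (q + 1)) * c') := by
    field_simp
    ring
  rw [hG', mul_zero, add_zero] at key'
  have key : 1 / 2 * a - 1 / (p + 1) * b + 1 / (q + 1) * c =
      (3 * p - 7) / (6 * (p - 1)) * a + (p - q) / ((q + 1) * (p - 1)) * c
        + 2 / (3 * (p - 1)) *
          (a - 3 * (p - 1) / (2 * (p + 1)) * b + 3 * (q - 1) / (2 * (q + 1)) * c) := by
    field_simp
    ring
  have hka : (0:ℝ) ≤ (3 * p - 7) / (6 * (p - 1)) := by positivity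
  have hkc : (0:ℝ) ≤ (p - q) / ((q + 1) * (p - 1)) := by
    apply div_nonneg (by linarith) (by positivity)
  have hm : 2 / (3 * (p - 1)) ≤ 2 / (3 * (q - 1)) := by
    rw [div_le_div_iff₀ (by linarith) (by linarith)]
    nlinarith
  have h1 := mul_le_mul_of_nonneg_left haa hka
  have h2 := mul_le_mul_of_nonneg_left hcc hkc
  have h3 : 0 ≤ (2 / (3 * (q - 1)) - 2 / (3 * (p - 1))) *
      -(a - 3 * (p - 1) / (2 * (p + 1)) * b + 3 * (q - 1) / (2 * (q + 1)) * c) :=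
    mul_nonneg (by linarith) (by linarith)
  nlinarith [key, key']

lemma alg_nonneg (p q ω a b c d : ℝ)
    (hp1 : 7 / 3 < p) (hq : 1 < q) (hqp : q < p) (hω : 0 < ω)
    (ha : 0 ≤ a) (hc : 0 ≤ c) (hd : 0 ≤ d)
    (hG : a - 3 * (p - 1) / (2 * (p + 1)) * b + 3 * (q - 1) / (2 * (q + 1)) * c ≤ 0) :
    0 ≤ (1 / 2 * a - 1 / (p + 1) * b + 1 / (q + 1) * c + ω / 2 * d)
        - 2 / (3 * (q - 1)) *
          (a - 3 * (p - 1) / (2 * (p + 1)) * b + 3 * (q - 1) / (2 * (q + 1)) * c) := by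
  have h := alg_main p q ω a b c d 0 0 0 hp1 hq hqp hω ha hc hd ha hc
    (by ring) hG
  have hd' : 0 ≤ ω / 2 * d := by positivity
  nlinarith [h]
lemma lpPow_nonneg (φ : E3 → ℂ) (r : ℝ) : 0 ≤ lpPow φ r := by
  rw [lpPow]; exact integral_nonneg fun x => Real.rpow_nonneg (norm_nonneg _) _

lemma gradNormSq_nonneg (φ : E3 → ℂ) : 0 ≤ gradNormSq φ := by
  rw [gradNormSq]; exact integral_nonneg fun x => by positivity

lemma lpPow_q_pos {φ : E3 → ℂ} (h : InH1 φ) {p q : ℝ} (hq : 1 < q) (hqp : q < p)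
    (hb : 0 < lpPow φ (p + 1)) : 0 < lpPow φ (q + 1) := by
  obtain ⟨hdiff, hL2, -⟩ := h
  have hbint : Integrable (fun x : E3 => ‖φ x‖ ^ (p + 1)) := by
    by_contra hni
    rw [lpPow, integral_undef hni] at hb
    exact lt_irrefl 0 hb
  have h2int : Integrable (fun x : E3 => ‖φ x‖ ^ ((2:ℝ))) := by
    have h0 := (memLp_two_iff_integrable_sq_norm hL2.aestronglyMeasurable).1 hL2
    refine h0.congr (Filter.Eventually.of_forall fun x => ?_)
    show ‖φ x‖ ^ (2:ℕ) = ‖φ x‖ ^ ((2:ℝ))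
    rw [← Real.rpow_natCast ‖φ x‖ 2]; norm_num
  have hcont : Continuous fun x : E3 => ‖φ x‖ ^ (q + 1) := by
    have h1 : Continuous fun t : ℝ => t ^ (q + 1) := by
      rw [continuous_iff_continuousAt]
      intro t
      exact Real.continuousAt_rpow_const t _ (Or.inr (by linarith))
    exact h1.comp hdiff.continuous.norm
  have hqint : Integrable (fun x : E3 => ‖φ x‖ ^ (q + 1)) := by
    refine Integrable.mono' (h2int.add hbint) hcont.aestronglyMeasurable
      (Filter.Eventually.of_forall fun x => ?_)
    rw [Real.norm_eq_abs, abs_of_nonneg (Real.rpow_nonneg (norm_nonneg _) _)]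
    simp only [Pi.add_apply]
    rcases le_or_gt ‖φ x‖ 1 with hx | hx
    · rcases eq_or_lt_of_le (norm_nonneg (φ x)) with hx0 | hx0
      · rw [← hx0, Real.zero_rpow (by linarith : q + 1 ≠ 0),
          Real.zero_rpow (by norm_num : (2:ℝ) ≠ 0),
          Real.zero_rpow (by linarith : p + 1 ≠ 0)]
        norm_num
      · have h2 := Real.rpow_le_rpow_of_exponent_ge hx0 hx (by linarith : (2:ℝ) ≤ q + 1)
        have h0 : 0 ≤ ‖φ x‖ ^ (p + 1) := Real.rpow_nonneg (norm_nonneg _) _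
        linarith
    · have h2 := Real.rpow_le_rpow_of_exponent_le hx.le (by linarith : q + 1 ≤ p + 1)
      have h0 : 0 ≤ ‖φ x‖ ^ ((2:ℝ)) := Real.rpow_nonneg (norm_nonneg _) _
      linarith
  rcases (lpPow_nonneg φ (q + 1)).lt_or_eq with hlt | heq
  · exact hlt
  · exfalso
    have hzero := (integral_eq_zero_iff_of_nonneg
      (fun x => Real.rpow_nonneg (norm_nonneg _) _) hqint).1 heq.symm
    have hb0 : (fun x : E3 => ‖φ x‖ ^ (p + 1)) =ᵐ[(volume : Measure E3)] 0 := by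
      filter_upwards [hzero] with x hx
      have hx' : ‖φ x‖ = 0 := by
        by_contra hne
        have h0 : 0 < ‖φ x‖ := lt_of_le_of_ne (norm_nonneg _) (Ne.symm hne)
        have h1 := Real.rpow_pos_of_pos h0 (q + 1)
        simp only [Pi.zero_apply] at hx
        linarith
      simp [hx', Real.zero_rpow (show p + 1 ≠ 0 by linarith)]
    rw [lpPow, integral_congr_ae hb0] at hb
    simp at hb

lemma root_exists (a b c Cp Cq ep eq' : ℝ) (ha : 0 ≤ a) (hb : 0 < b) (hc : 0 < c)
    (hCp : 0 < Cp) (hCq : 0 < Cq) (hee : 0 < ep - eq') (heq : 0 < eq')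
    (hG1 : a - Cp * b + Cq * c < 0) :
    ∃ l : ℝ, 0 < l ∧ l ≤ 1 ∧
      l ^ (2:ℝ) * a - Cp * (l ^ ep * b) + Cq * (l ^ eq' * c) = 0 := by
  set K := Cq * c / (Cp * b) with hK
  have hKpos : 0 < K := by positivity
  set e := ep - eq' with he
  set ε : ℝ := min (1/2) (K ^ (1/e) / 2) with hε
  have hεpos : 0 < ε := lt_min (by norm_num) (by positivity)
  have hεle : ε ≤ 1 := le_trans (min_le_left _ _) (by norm_num)
  have hεK : ε ^ e < K := by
    have h1 : ε ≤ K ^ (1/e) / 2 := min_le_right _ _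
    have h2 : ε < K ^ (1/e) := by
      have := Real.rpow_pos_of_pos hKpos (1/e)
      linarith
    calc ε ^ e < (K ^ (1/e)) ^ e := Real.rpow_lt_rpow hεpos.le h2 hee
    _ = K := by
      rw [← Real.rpow_mul hKpos.le, one_div, inv_mul_cancel₀ (ne_of_gt hee), Real.rpow_one]
  have hgε : 0 < ε ^ (2:ℝ) * a - Cp * (ε ^ ep * b) + Cq * (ε ^ eq' * c) := by
    have hsplit : ε ^ ep = ε ^ eq' * ε ^ e := by
      rw [← Real.rpow_add hεpos]; congr 1; rw [he]; ring
    have h5 : ε ^ e * (Cp * b) < Cq * c := by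
      rw [hK] at hεK
      exact (lt_div_iff₀ (by positivity)).1 hεK
    have h6 : ε ^ eq' * (ε ^ e * (Cp * b)) < ε ^ eq' * (Cq * c) :=
      mul_lt_mul_of_pos_left h5 (Real.rpow_pos_of_pos hεpos _)
    have h7 : 0 ≤ ε ^ (2:ℝ) * a := mul_nonneg (Real.rpow_nonneg hεpos.le _) ha
    have h8 : Cp * (ε ^ ep * b) < Cq * (ε ^ eq' * c) := by
      rw [hsplit]
      nlinarith [h6]
    linarith
  have hcont : ContinuousOn
      (fun l : ℝ => l ^ (2:ℝ) * a - Cp * (l ^ ep * b) + Cq * (l ^ eq' * c)) (Icc ε 1) := by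
    intro x hx
    have hx0 : x ≠ 0 := ne_of_gt (lt_of_lt_of_le hεpos hx.1)
    have hrc : ∀ r : ℝ, ContinuousAt (fun l : ℝ => l ^ r) x :=
      fun r => Real.continuousAt_rpow_const x r (Or.inl hx0)
    exact ContinuousAt.continuousWithinAt
      ((((hrc 2).mul continuousAt_const).sub
        (continuousAt_const.mul ((hrc ep).mul continuousAt_const))).add
        (continuousAt_const.mul ((hrc eq').mul continuousAt_const)))
  have h0mem : (0:ℝ) ∈ Icc
      ((fun l : ℝ => l ^ (2:ℝ) * a - Cp * (l ^ ep * b) + Cq * (l ^ eq' * c)) 1)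
      ((fun l : ℝ => l ^ (2:ℝ) * a - Cp * (l ^ ep * b) + Cq * (l ^ eq' * c)) ε) := by
    constructor
    · simp only [Real.one_rpow, one_mul]
      linarith
    · simp only []
      linarith
  obtain ⟨l₀, hl₀, hgl₀⟩ := intermediate_value_Icc' hεle hcont h0mem
  exact ⟨l₀, lt_of_lt_of_le hεpos hl₀.1, hl₀.2, hgl₀⟩
lemma key_step (p q ω : ℝ) (hp1 : 7 / 3 < p) (hq : 1 < q) (hqp : q < p) (hω : 0 < ω)
    {φ : E3 → ℂ} (h1 : InH1 φ) (h2 : φ ≠ 0) (h3 : Gfun p q φ ≤ 0) :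
    ∃ ψ : E3 → ℂ, InH1 ψ ∧ ψ ≠ 0 ∧ Gfun p q ψ = 0 ∧ Sfun p q ω ψ ≤ Ifun p q ω φ := by
  rcases eq_or_lt_of_le h3 with hG0 | hGlt
  · exact ⟨φ, h1, h2, hG0, by rw [Ifun, hG0, mul_zero, sub_zero]⟩
  · have hGe : Gfun p q φ = gradNormSq φ - 3 * (p - 1) / (2 * (p + 1)) * lpPow φ (p + 1)
        + 3 * (q - 1) / (2 * (q + 1)) * lpPow φ (q + 1) := rfl
    have ha := gradNormSq_nonneg φ
    have hbnn := lpPow_nonneg φ (p + 1)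
    have hcnn := lpPow_nonneg φ (q + 1)
    have hdnn := lpPow_nonneg φ 2
    have hCp : (0:ℝ) < 3 * (p - 1) / (2 * (p + 1)) :=
      div_pos (by linarith) (by linarith)
    have hCq : (0:ℝ) < 3 * (q - 1) / (2 * (q + 1)) :=
      div_pos (by linarith) (by linarith)
    rw [hGe] at hGlt
    have hbpos : 0 < lpPow φ (p + 1) := by
      by_contra hcon
      push_neg at hcon
      nlinarith [mul_nonneg hCq.le hcnn, mul_nonpos_of_nonneg_of_nonpos hCp.le hcon]
    have hcpos := lpPow_q_pos h1 hq hqp hbpos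
    obtain ⟨l₀, hl₀pos, hl₀le, hroot⟩ := root_exists (gradNormSq φ) (lpPow φ (p + 1))
      (lpPow φ (q + 1)) (3 * (p - 1) / (2 * (p + 1))) (3 * (q - 1) / (2 * (q + 1)))
      (3/2*(p+1) - 3) (3/2*(q+1) - 3) ha hbpos hcpos hCp hCq
      (by linarith) (by linarith) hGlt
    have hψG : Gfun p q (scl l₀ φ) = 0 := by
      rw [Gfun, scl_gradNormSq h1.1 hl₀pos, scl_lpPow hl₀pos (p + 1) (by linarith),
        scl_lpPow hl₀pos (q + 1) (by linarith)]
      exact hroot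
    refine ⟨scl l₀ φ, scl_inH1 h1 hl₀pos, scl_ne_zero h2 hl₀pos, hψG, ?_⟩
    have hS : Sfun p q ω (scl l₀ φ) = 1/2 * (l₀ ^ (2:ℝ) * gradNormSq φ)
        - 1/(p+1) * (l₀ ^ (3/2*(p+1) - 3) * lpPow φ (p+1))
        + 1/(q+1) * (l₀ ^ (3/2*(q+1) - 3) * lpPow φ (q+1)) + ω/2 * lpPow φ 2 := by
      rw [Sfun, scl_gradNormSq h1.1 hl₀pos, scl_lpPow hl₀pos (p + 1) (by linarith),
        scl_lpPow hl₀pos (q + 1) (by linarith), scl_lpPow hl₀pos 2 (by norm_num),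
        show (3:ℝ)/2*2 - 3 = 0 by norm_num, Real.rpow_zero, one_mul]
    rw [hS, Ifun, Sfun, Gfun]
    exact alg_main p q ω (gradNormSq φ) (lpPow φ (p + 1)) (lpPow φ (q + 1)) (lpPow φ 2)
      (l₀ ^ (2:ℝ) * gradNormSq φ) (l₀ ^ (3/2*(p+1) - 3) * lpPow φ (p + 1))
      (l₀ ^ (3/2*(q+1) - 3) * lpPow φ (q + 1))
      hp1 hq hqp hω ha hcnn hdnn
      (mul_le_of_le_one_left ha (Real.rpow_le_one hl₀pos.le hl₀le (by norm_num)))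
      (mul_le_of_le_one_left hcnn (Real.rpow_le_one hl₀pos.le hl₀le (by linarith)))
      hroot (le_of_lt hGlt)

lemma Ifun_nonneg (p q ω : ℝ) (hp1 : 7 / 3 < p) (hq : 1 < q) (hqp : q < p) (hω : 0 < ω)
    {φ : E3 → ℂ} (h3 : Gfun p q φ ≤ 0) : 0 ≤ Ifun p q ω φ := by
  rw [Ifun, Sfun, Gfun]
  exact alg_nonneg p q ω (gradNormSq φ) (lpPow φ (p + 1)) (lpPow φ (q + 1)) (lpPow φ 2)
    hp1 hq hqp hω (gradNormSq_nonneg φ) (lpPow_nonneg φ (q + 1)) (lpPow_nonneg φ 2) h3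

theorem ground_state_energy_eq_relaxed (p q ω : ℝ)
    (hp1 : 7 / 3 < p) (hp2 : p < 5) (hq : 1 < q) (hqp : q < p) (hω : 0 < ω) :
    sInf {m : ℝ | ∃ φ : E3 → ℂ, InH1 φ ∧ φ ≠ 0 ∧ Gfun p q φ = 0 ∧ m = Sfun p q ω φ}
      = sInf {m : ℝ | ∃ φ : E3 → ℂ, InH1 φ ∧ φ ≠ 0 ∧ Gfun p q φ ≤ 0 ∧ m = Ifun p q ω φ} := by
  set A := {m : ℝ | ∃ φ : E3 → ℂ, InH1 φ ∧ φ ≠ 0 ∧ Gfun p q φ = 0 ∧ m = Sfun p q ω φ} with hA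
  set B := {m : ℝ | ∃ φ : E3 → ℂ, InH1 φ ∧ φ ≠ 0 ∧ Gfun p q φ ≤ 0 ∧ m = Ifun p q ω φ} with hB
  have hAB : A ⊆ B := by
    rintro x ⟨φ, hφ1, hφ2, hφ3, rfl⟩
    exact ⟨φ, hφ1, hφ2, le_of_eq hφ3, by rw [Ifun, hφ3, mul_zero, sub_zero]⟩
  have hBkey : ∀ x ∈ B, 0 ≤ x ∧ ∃ y ∈ A, y ≤ x := by
    rintro x ⟨φ, hφ1, hφ2, hφ3, rfl⟩
    refine ⟨Ifun_nonneg p q ω hp1 hq hqp hω hφ3, ?_⟩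
    obtain ⟨ψ, hψ1, hψ2, hψ3, hψ4⟩ := key_step p q ω hp1 hq hqp hω hφ1 hφ2 hφ3
    exact ⟨Sfun p q ω ψ, ⟨ψ, hψ1, hψ2, hψ3, rfl⟩, hψ4⟩
  rcases eq_empty_or_nonempty A with hAe | hAne
  · have hBe : B = ∅ := by
      rw [eq_empty_iff_forall_notMem]
      intro x hx
      obtain ⟨-, y, hy, -⟩ := hBkey x hx
      exact (eq_empty_iff_forall_notMem.1 hAe) y hy
    rw [hAe, hBe]
  · have hBne : B.Nonempty := hAne.mono hAB
    have hBbdd : BddBelow B := ⟨0, fun x hx => (hBkey x hx).1⟩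
    have hAbdd : BddBelow A := ⟨0, fun x hx => (hBkey x (hAB hx)).1⟩
    apply le_antisymm
    · apply le_csInf hBne
      intro x hx
      obtain ⟨-, y, hy, hyx⟩ := hBkey x hx
      exact (csInf_le hAbdd hy).trans hyx
    · exact csInf_le_csInf hBbdd hAne hAB

end
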